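/- For every state |h⟩ of set (5), the post-measurement state (Q_{Aa}Q_{Bb})(|h⟩ ⊗ |F⟩_{ac₁v₁e₁} ⊗ |F⟩_{bc₂v₂e₂}) is nonzero, and the post-measurement states of distinct states of set (5) are pairwise orthogonal. (Step 1 of the proof of Theorem 10: the two local measurements corresponding to outcomes M₁,₁ and M₂,₁ are orthogonality-preserving on set (5) tensored with two four-partite |F⟩ ancilla states.) -/

import Mathlib

noncomputable section

/-- View a coefficient function as a vector of the Euclidean (Hilbert) space. -/
def ofFun {ι : Type*} [Fintype ι] (f : ι → ℂ) : EuclideanSpace ℂ ι := WithLp.toLp 2 f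

/-- Transport an endomorphism of the coefficient functions to the Euclidean space. -/
def toE {ι : Type*} [Fintype ι] (T : (ι → ℂ) →ₗ[ℂ] (ι → ℂ)) :
    Module.End ℂ (EuclideanSpace ℂ ι) :=
  (WithLp.linearEquiv 2 ℂ (ι → ℂ)).symm.toLinearMap ∘ₗ T ∘ₗ
    (WithLp.linearEquiv 2 ℂ (ι → ℂ)).toLinearMap

open Classical in
/-- Diagonal orthogonal projection keeping exactly the basis vectors whose index
satisfies `f`. -/
def diagP {ι : Type*} [Fintype ι] (f : ι → Prop) : Module.End ℂ (EuclideanSpace ℂ ι) :=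
  toE (LinearMap.pi fun i => (if f i then (1 : ℂ) else 0) • LinearMap.proj i)

/-- Tensor product of two vectors, realized on the product index set. -/
def tensE {ι κ : Type*} [Fintype ι] [Fintype κ]
    (u : EuclideanSpace ℂ ι) (w : EuclideanSpace ℂ κ) : EuclideanSpace ℂ (ι × κ) :=
  ofFun fun p => u p.1 * w p.2

/-- The root of unity `ω_n = e^{2πi/n}`. -/
def omegaC (n : ℕ) : ℂ := Complex.exp (2 * Real.pi * Complex.I / n)

/-- Computational basis vector `|k⟩` of `ℂ^d`. -/
def ketD (d k : ℕ) : EuclideanSpace ℂ (Fin d) :=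
  ofFun fun u => if (u : ℕ) = k then 1 else 0

/-- The (unnormalized) vector `|α_i⟩ = Σ_{u=0}^{d−1} ω_d^{iu}|u⟩`. -/
def alphaD (d i : ℕ) : EuclideanSpace ℂ (Fin d) :=
  ofFun fun u => omegaC d ^ (i * (u : ℕ))

/-- The (unnormalized) vector `|γ_m⟩ = Σ_{u=0}^{d−2} ω_{d−1}^{mu}|u+1⟩`. -/
def gammaD (d m : ℕ) : EuclideanSpace ℂ (Fin d) :=
  ofFun fun u => if (u : ℕ) = 0 then 0 else omegaC (d - 1) ^ (m * ((u : ℕ) - 1))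

/-- Tensor product of five vectors of `ℂ^d`, realized on the index set `Fin 5 → Fin d`. -/
def tp5 {d : ℕ} (v0 v1 v2 v3 v4 : EuclideanSpace ℂ (Fin d)) :
    EuclideanSpace ℂ (Fin 5 → Fin d) :=
  ofFun fun x => v0 (x 0) * v1 (x 1) * v2 (x 2) * v3 (x 3) * v4 (x 4)

/-- The states of set (5): family `k : Fin 10` corresponds to `H_{k+1}`; the parameter
`a` is the spectral parameter (`i ∈ ℤ_d` for `H₁,…,H₅`, `m ∈ ℤ_{d−1}` for `H₆,…,H₁₀`),
and `p` is the index of the computational basis vector `|p⟩ ∈ {|1⟩,…,|d−1⟩}`. -/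
def stateOf (d : ℕ) (k : Fin 10) (a p : ℕ) : EuclideanSpace ℂ (Fin 5 → Fin d) :=
  if k = 0 then tp5 (alphaD d a) (alphaD d a) (ketD d p) (ketD d 0) (ketD d 0)
  else if k = 1 then tp5 (alphaD d a) (ketD d p) (ketD d 0) (ketD d 0) (alphaD d a)
  else if k = 2 then tp5 (ketD d p) (ketD d 0) (ketD d 0) (alphaD d a) (alphaD d a)
  else if k = 3 then tp5 (ketD d 0) (ketD d 0) (alphaD d a) (alphaD d a) (ketD d p)
  else if k = 4 then tp5 (ketD d 0) (alphaD d a) (alphaD d a) (ketD d p) (ketD d 0)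
  else if k = 5 then tp5 (gammaD d a) (ketD d 0) (ketD d p) (ketD d 0) (ketD d 1)
  else if k = 6 then tp5 (ketD d 0) (ketD d p) (ketD d 0) (ketD d 1) (gammaD d a)
  else if k = 7 then tp5 (ketD d p) (ketD d 0) (ketD d 1) (gammaD d a) (ketD d 0)
  else if k = 8 then tp5 (ketD d 0) (ketD d 1) (gammaD d a) (ketD d 0) (ketD d p)
  else tp5 (ketD d 1) (gammaD d a) (ketD d 0) (ketD d p) (ketD d 0)

/-- Ranges of the parameters of the states of set (5). -/
def validIdx (d : ℕ) (k : Fin 10) (a p : ℕ) : Prop :=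
  (if (k : ℕ) < 5 then a < d else a < d - 1) ∧ 1 ≤ p ∧ p < d

/-- The full Hilbert space: five `ℂ^d` subsystems `A,B,C,D,E` (positions `0,…,4`),
ancilla qubits `a,b` (first `Fin 2 → Fin 2` factor, attached to `A,B`), ancilla
qubits `c₁,c₂` (second factor, held by Charlie), `v₁,v₂` (third factor, held by
Dave), and `e₁,e₂` (fourth factor, held by Eve). -/
abbrev WF (d : ℕ) : Type :=
  EuclideanSpace ℂ
    ((Fin 5 → Fin d) ×
      ((Fin 2 → Fin 2) × (Fin 2 → Fin 2) × (Fin 2 → Fin 2) × (Fin 2 → Fin 2)))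

/-- The ancilla state `|F⟩_{ac₁v₁e₁} ⊗ |F⟩_{bc₂v₂e₂}`, where
`|F⟩ = (|0000⟩+|1111⟩)/√2`. -/
def ancF :
    EuclideanSpace ℂ
      ((Fin 2 → Fin 2) × (Fin 2 → Fin 2) × (Fin 2 → Fin 2) × (Fin 2 → Fin 2)) :=
  ofFun fun q =>
    ∏ k : Fin 2,
      (if q.1 k = q.2.1 k ∧ q.2.1 k = q.2.2.1 k ∧ q.2.2.1 k = q.2.2.2 k then
        (Real.sqrt 2 : ℂ)⁻¹ else 0)

/-- The measurement projector
`Q_{Xx} = |0⟩⟨0|_X ⊗ |0⟩⟨0|_x + (Σ_{k=1}^{d−1}|k⟩⟨k|_X) ⊗ |1⟩⟨1|_x`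
on the main subsystem at position `X` and its ancilla qubit at position `j`. -/
def QprojF (d : ℕ) (X : Fin 5) (j : Fin 2) : Module.End ℂ (WF d) :=
  diagP fun q => ((q.1 X : ℕ) = 0 ∧ q.2.1 j = 0) ∨ ((q.1 X : ℕ) ≠ 0 ∧ q.2.1 j = 1)

/-- The post-measurement state
`(Q_{Aa}Q_{Bb})(|h⟩ ⊗ |F⟩_{ac₁v₁e₁} ⊗ |F⟩_{bc₂v₂e₂})`. -/
def postF (d : ℕ) (h : EuclideanSpace ℂ (Fin 5 → Fin d)) : WF d :=
  (QprojF d 0 0 * QprojF d 1 1) (tensE h ancF)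


set_option maxHeartbeats 3000000

lemma omega_pow_n {n : ℕ} (hn : 0 < n) : omegaC n ^ n = 1 := by
  have hn' : (n:ℂ) ≠ 0 := Nat.cast_ne_zero.2 hn.ne'
  rw [omegaC, ← Complex.exp_nat_mul,
    show (n:ℂ) * (2 * Real.pi * Complex.I / n) = 2 * Real.pi * Complex.I by field_simp,
    Complex.exp_two_pi_mul_I]

lemma omega_pow_ne_one {n m : ℕ} (h0 : 0 < m) (h : m < n) : omegaC n ^ m ≠ 1 := by
  rw [omegaC, ← Complex.exp_nat_mul]
  intro hc
  rw [Complex.exp_eq_one_iff] at hc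
  obtain ⟨k, hk⟩ := hc
  have hn : (n : ℂ) ≠ 0 := Nat.cast_ne_zero.2 (by omega)
  have h2πI : (2 * (Real.pi:ℂ) * Complex.I) ≠ 0 := by
    simp [Real.pi_ne_zero, Complex.I_ne_zero, Complex.ofReal_ne_zero]
  field_simp at hk
  have hmc : (m:ℂ) * (2 * (Real.pi:ℂ) * Complex.I) = ((k*n : ℤ):ℂ) * (2 * (Real.pi:ℂ) * Complex.I) := by
    push_cast
    linear_combination (2 * (Real.pi:ℂ) * Complex.I) * hk
  have hmz : ((m:ℤ):ℂ) = ((k*n : ℤ):ℂ) := by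
    have := mul_right_cancel₀ h2πI hmc
    push_cast at this ⊢
    exact this
  have hm : (m:ℤ) = k * n := by exact_mod_cast hmz
  have hn0 : (0:ℤ) < n := by exact_mod_cast (by omega : 0 < n)
  have hm0 : (0:ℤ) < m := by exact_mod_cast h0
  have hmn : (m:ℤ) < n := by exact_mod_cast h
  rcases le_or_gt k 0 with hk0 | hk0
  · have : k * n ≤ 0 := mul_nonpos_of_nonpos_of_nonneg hk0 hn0.le
    linarith
  · have hk1 : (1:ℤ) ≤ k := hk0
    have : (n:ℤ) ≤ k * n := le_mul_of_one_le_left hn0.le hk1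
    linarith

lemma conj_omega (n : ℕ) : (starRingEnd ℂ) (omegaC n) = (omegaC n)⁻¹ := by
  rw [omegaC, ← Complex.exp_conj, ← Complex.exp_neg]
  congr 1
  simp [map_div₀, Complex.conj_I, map_ofNat]
  ring

lemma geom_omega {n m : ℕ} (h0 : 0 < m) (h : m < n) :
    ∑ u ∈ Finset.range n, (omegaC n ^ m) ^ u = 0 := by
  rw [geom_sum_eq (omega_pow_ne_one h0 h)]
  rw [← pow_mul, mul_comm, pow_mul, omega_pow_n (by omega), one_pow]
  simp

lemma inner_euclidean {ι : Type*} [Fintype ι] (x y : EuclideanSpace ℂ ι) :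
    (inner ℂ x y : ℂ) = ∑ i, (starRingEnd ℂ) (x i) * y i := by
  simp [PiLp.inner_apply, RCLike.inner_apply]
  exact Finset.sum_congr rfl fun _ _ => mul_comm _ _

lemma inner_tp5 {d : ℕ} (v0 v1 v2 v3 v4 w0 w1 w2 w3 w4 : EuclideanSpace ℂ (Fin d)) :
    (inner ℂ (tp5 v0 v1 v2 v3 v4) (tp5 w0 w1 w2 w3 w4) : ℂ) =
      inner ℂ v0 w0 * inner ℂ v1 w1 * inner ℂ v2 w2 * inner ℂ v3 w3 * inner ℂ v4 w4 := by
  set g : Fin 5 → Fin d → ℂ :=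
    ![fun j => (starRingEnd ℂ) (v0 j) * w0 j, fun j => (starRingEnd ℂ) (v1 j) * w1 j,
      fun j => (starRingEnd ℂ) (v2 j) * w2 j, fun j => (starRingEnd ℂ) (v3 j) * w3 j,
      fun j => (starRingEnd ℂ) (v4 j) * w4 j] with hg
  have key : ∀ x : Fin 5 → Fin d,
      (starRingEnd ℂ) (tp5 v0 v1 v2 v3 v4 x) * tp5 w0 w1 w2 w3 w4 x
        = ∏ i : Fin 5, g i (x i) := by
    intro x
    simp [hg, tp5, ofFun, Fin.prod_univ_five, Matrix.cons_val_succ]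
    ring
  have h2 : (∑ x : Fin 5 → Fin d, ∏ i : Fin 5, g i (x i))
      = ∏ i : Fin 5, ∑ j : Fin d, g i j := by
    rw [← Fintype.piFinset_univ, ← Finset.prod_univ_sum]
  rw [inner_euclidean, Finset.sum_congr rfl fun x _ => key x, h2]
  simp [hg, Fin.prod_univ_five, Matrix.cons_val_succ, inner_euclidean]

lemma omega_ne_zero (n : ℕ) : omegaC n ≠ 0 := Complex.exp_ne_zero _

lemma inner_ketD_ketD (d p q : ℕ) :
    (inner ℂ (ketD d p) (ketD d q) : ℂ) = if p = q ∧ p < d then 1 else 0 := by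
  rw [inner_euclidean]
  simp only [ketD, ofFun, apply_ite (starRingEnd ℂ), map_one, map_zero, ite_mul, one_mul,
    zero_mul]
  by_cases h : p = q ∧ p < d
  · obtain ⟨rfl, hpd⟩ := h
    rw [Finset.sum_eq_single (⟨p, hpd⟩ : Fin d)]
    · simp [hpd]
    · intro b _ hb
      have hb' : ¬((b:ℕ) = p) := fun hc => hb (Fin.ext hc)
      simp [hb']
    · simp
  · rw [if_neg h]
    apply Finset.sum_eq_zero
    intro u _
    have hu := u.isLt
    by_cases h2 : (u:ℕ) = q
    · have h1 : ¬((u:ℕ) = p) := fun hc => h ⟨by omega, by omega⟩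
      simp [h1]
    · simp [h2]

lemma inner_gammaD_ket0 (d m : ℕ) : (inner ℂ (gammaD d m) (ketD d 0) : ℂ) = 0 := by
  rw [inner_euclidean]
  apply Finset.sum_eq_zero
  intro u _
  by_cases h : (u:ℕ) = 0 <;> simp [gammaD, ketD, ofFun, h]

lemma inner_ket0_gammaD (d m : ℕ) : (inner ℂ (ketD d 0) (gammaD d m) : ℂ) = 0 := by
  rw [inner_euclidean]
  apply Finset.sum_eq_zero
  intro u _
  by_cases h : (u:ℕ) = 0 <;> simp [gammaD, ketD, ofFun, h]

lemma conj_omega_pow_mul_self (n k : ℕ) :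
    (starRingEnd ℂ) (omegaC n ^ k) * omegaC n ^ k = 1 := by
  rw [map_pow, conj_omega, ← mul_pow, inv_mul_cancel₀ (omega_ne_zero n), one_pow]

lemma inner_alphaD_lt {d i j : ℕ} (hij : i < j) (hj : j < d) :
    (inner ℂ (alphaD d i) (alphaD d j) : ℂ) = 0 := by
  rw [inner_euclidean]
  have key : ∀ u : Fin d,
      (starRingEnd ℂ) (alphaD d i u) * alphaD d j u = (omegaC d ^ (j - i)) ^ (u : ℕ) := by
    intro u
    simp only [alphaD, ofFun]
    rw [show j * (u:ℕ) = i * u + (j - i) * u by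
      have : i ≤ j := hij.le
      nlinarith [Nat.sub_add_cancel this]]
    rw [pow_add, ← mul_assoc, conj_omega_pow_mul_self, one_mul, ← pow_mul]
  rw [Finset.sum_congr rfl fun u _ => key u]
  rw [Fin.sum_univ_eq_sum_range (fun t => (omegaC d ^ (j - i)) ^ t) d]
  exact geom_omega (by omega) (by omega)

lemma inner_alphaD_ne {d i j : ℕ} (hi : i < d) (hj : j < d) (hne : i ≠ j) :
    (inner ℂ (alphaD d i) (alphaD d j) : ℂ) = 0 := by
  rcases lt_or_gt_of_ne hne with h | h
  · exact inner_alphaD_lt h hj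
  · rw [← inner_conj_symm, inner_alphaD_lt h hi, map_zero]

lemma inner_gammaD_lt {d m m' : ℕ} (hmm : m < m') (hm' : m' < d - 1) (hd : 3 ≤ d) :
    (inner ℂ (gammaD d m) (gammaD d m') : ℂ) = 0 := by
  rw [inner_euclidean]
  have hd1 : d = (d - 1 - 1) + 1 + 1 := by omega
  set F : ℕ → ℂ := fun t =>
    (starRingEnd ℂ) (if t = 0 then 0 else omegaC (d-1) ^ (m * (t - 1))) *
      (if t = 0 then 0 else omegaC (d-1) ^ (m' * (t - 1))) with hF
  have h1 : (∑ u : Fin d, (starRingEnd ℂ) (gammaD d m u) * gammaD d m' u)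
      = ∑ t ∈ Finset.range d, F t := by
    rw [← Fin.sum_univ_eq_sum_range F d]
    exact Finset.sum_congr rfl fun u _ => rfl
  rw [h1, show d = (d - 1) + 1 by omega, Finset.sum_range_succ']
  have hF0 : F 0 = 0 := by simp [hF]
  have hFs : ∀ t, F (t + 1) = (omegaC (d-1) ^ (m' - m)) ^ t := by
    intro t
    simp only [hF, Nat.succ_ne_zero, if_false, Nat.add_sub_cancel]
    rw [show m' * t = m * t + (m' - m) * t by nlinarith [Nat.sub_add_cancel hmm.le]]
    rw [pow_add, ← mul_assoc, conj_omega_pow_mul_self, one_mul, ← pow_mul]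
  rw [hF0, add_zero, Finset.sum_congr rfl fun t _ => hFs t]
  exact geom_omega (by omega) (by omega)

lemma inner_gammaD_ne {d m m' : ℕ} (hm : m < d - 1) (hm' : m' < d - 1) (hne : m ≠ m')
    (hd : 3 ≤ d) : (inner ℂ (gammaD d m) (gammaD d m') : ℂ) = 0 := by
  rcases lt_or_gt_of_ne hne with h | h
  · exact inner_gammaD_lt h hm' hd
  · rw [← inner_conj_symm, inner_gammaD_lt h hm hd, map_zero]

open Classical in
lemma diagP_apply {ι : Type*} [Fintype ι] (f : ι → Prop) (v : EuclideanSpace ℂ ι) (i : ι) :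
    diagP f v i = (if f i then (1:ℂ) else 0) * v i := by
  simp only [diagP, toE, LinearMap.coe_comp, Function.comp_apply, LinearEquiv.coe_coe,
    LinearMap.pi_apply, LinearMap.smul_apply, LinearMap.proj_apply, smul_eq_mul]
  split <;> rename_i h <;> simp [h, WithLp.linearEquiv]

abbrev Anc := (Fin 2 → Fin 2) × (Fin 2 → Fin 2) × (Fin 2 → Fin 2) × (Fin 2 → Fin 2)

lemma postF_apply (d : ℕ) (h : EuclideanSpace ℂ (Fin 5 → Fin d)) (x : Fin 5 → Fin d)
    (q : Anc) :
    postF d h (x, q) =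
      (if ((x 0 : ℕ) = 0 ∧ q.1 0 = 0) ∨ ((x 0 : ℕ) ≠ 0 ∧ q.1 0 = 1) then (1:ℂ) else 0) *
      ((if ((x 1 : ℕ) = 0 ∧ q.1 1 = 0) ∨ ((x 1 : ℕ) ≠ 0 ∧ q.1 1 = 1) then (1:ℂ) else 0) *
        (h x * ancF q)) := by
  show ((QprojF d 0 0) ((QprojF d 1 1) (tensE h ancF))) (x, q) = _
  rw [QprojF, diagP_apply, QprojF, diagP_apply]
  split_ifs <;> rfl

lemma sum_fin2fun (F : (Fin 2 → Fin 2) → ℂ) :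
    ∑ g : Fin 2 → Fin 2, F g = ∑ a : Fin 2, ∑ b : Fin 2, F ![a, b] := by
  rw [← Equiv.sum_comp (finTwoArrowEquiv (Fin 2)).symm F, Fintype.sum_prod_type]
  rfl

set_option maxHeartbeats 3000000 in
lemma sum_anc (b0 b1 : Fin 2) :
    ∑ q : Anc, ((if q.1 0 = b0 then (1:ℂ) else 0) * (if q.1 1 = b1 then (1:ℂ) else 0) *
      ((starRingEnd ℂ) (ancF q) * ancF q)) = (4:ℂ)⁻¹ := by
  have h2 : ((Real.sqrt 2 : ℝ) : ℂ)⁻¹ * ((Real.sqrt 2 : ℝ) : ℂ)⁻¹ = (2:ℂ)⁻¹ := by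
    rw [← mul_inv,
      show ((Real.sqrt 2:ℝ):ℂ) * ((Real.sqrt 2:ℝ):ℂ) = (2:ℂ) by
        norm_cast; exact Real.mul_self_sqrt (by norm_num)]
  simp only [Fintype.sum_prod_type, sum_fin2fun]
  fin_cases b0 <;> fin_cases b1 <;>
    simp only [Fin.sum_univ_two, ancF, ofFun, Fin.prod_univ_two, Matrix.cons_val_zero,
      Matrix.cons_val_one, Matrix.head_cons, map_mul, apply_ite (starRingEnd ℂ), map_zero,
      map_inv₀, Complex.conj_ofReal] <;>
    norm_num [h2]

lemma inner_postF (d : ℕ) (h h' : EuclideanSpace ℂ (Fin 5 → Fin d)) :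
    (inner ℂ (postF d h) (postF d h') : ℂ) = (4:ℂ)⁻¹ * inner ℂ h h' := by
  rw [inner_euclidean, inner_euclidean h h', Fintype.sum_prod_type]
  have key : ∀ x : Fin 5 → Fin d,
      (∑ q : Anc, (starRingEnd ℂ) (postF d h (x, q)) * postF d h' (x, q))
        = (4:ℂ)⁻¹ * ((starRingEnd ℂ) (h x) * h' x) := by
    intro x
    set b0 : Fin 2 := if (x 0 : ℕ) = 0 then 0 else 1 with hb0
    set b1 : Fin 2 := if (x 1 : ℕ) = 0 then 0 else 1 with hb1
    have hc0 : ∀ q : Anc,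
        (((x 0 : ℕ) = 0 ∧ q.1 0 = 0) ∨ ((x 0 : ℕ) ≠ 0 ∧ q.1 0 = 1)) ↔ q.1 0 = b0 := by
      intro q
      by_cases hx : (x 0 : ℕ) = 0 <;> simp [hb0, hx]
    have hc1 : ∀ q : Anc,
        (((x 1 : ℕ) = 0 ∧ q.1 1 = 0) ∨ ((x 1 : ℕ) ≠ 0 ∧ q.1 1 = 1)) ↔ q.1 1 = b1 := by
      intro q
      by_cases hx : (x 1 : ℕ) = 0 <;> simp [hb1, hx]
    calc (∑ q : Anc, (starRingEnd ℂ) (postF d h (x, q)) * postF d h' (x, q))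
        = ∑ q : Anc, ((starRingEnd ℂ) (h x) * h' x) *
            ((if q.1 0 = b0 then (1:ℂ) else 0) * (if q.1 1 = b1 then (1:ℂ) else 0) *
              ((starRingEnd ℂ) (ancF q) * ancF q)) := by
          refine Finset.sum_congr rfl fun q _ => ?_
          rw [postF_apply, postF_apply]
          simp only [map_mul, apply_ite (starRingEnd ℂ), map_one, map_zero, hc0 q, hc1 q]
          split_ifs <;> ring
      _ = ((starRingEnd ℂ) (h x) * h' x) * ∑ q : Anc,
            ((if q.1 0 = b0 then (1:ℂ) else 0) * (if q.1 1 = b1 then (1:ℂ) else 0) *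
              ((starRingEnd ℂ) (ancF q) * ancF q)) := by rw [← Finset.mul_sum]
      _ = (4:ℂ)⁻¹ * ((starRingEnd ℂ) (h x) * h' x) := by rw [sum_anc]; ring
  rw [Finset.sum_congr rfl fun x _ => key x, ← Finset.mul_sum]

lemma stateOf_0 (d a p : ℕ) : stateOf d ⟨0, by norm_num⟩ a p = tp5 (alphaD d a) (alphaD d a) (ketD d p) (ketD d 0) (ketD d 0) := by
  simp [stateOf]

lemma stateOf_1 (d a p : ℕ) : stateOf d ⟨1, by norm_num⟩ a p = tp5 (alphaD d a) (ketD d p) (ketD d 0) (ketD d 0) (alphaD d a) := by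
  simp [stateOf]

lemma stateOf_2 (d a p : ℕ) : stateOf d ⟨2, by norm_num⟩ a p = tp5 (ketD d p) (ketD d 0) (ketD d 0) (alphaD d a) (alphaD d a) := by
  simp [stateOf]

lemma stateOf_3 (d a p : ℕ) : stateOf d ⟨3, by norm_num⟩ a p = tp5 (ketD d 0) (ketD d 0) (alphaD d a) (alphaD d a) (ketD d p) := by
  simp [stateOf]

lemma stateOf_4 (d a p : ℕ) : stateOf d ⟨4, by norm_num⟩ a p = tp5 (ketD d 0) (alphaD d a) (alphaD d a) (ketD d p) (ketD d 0) := by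
  simp [stateOf]

lemma stateOf_5 (d a p : ℕ) : stateOf d ⟨5, by norm_num⟩ a p = tp5 (gammaD d a) (ketD d 0) (ketD d p) (ketD d 0) (ketD d 1) := by
  simp [stateOf]

lemma stateOf_6 (d a p : ℕ) : stateOf d ⟨6, by norm_num⟩ a p = tp5 (ketD d 0) (ketD d p) (ketD d 0) (ketD d 1) (gammaD d a) := by
  simp [stateOf]

lemma stateOf_7 (d a p : ℕ) : stateOf d ⟨7, by norm_num⟩ a p = tp5 (ketD d p) (ketD d 0) (ketD d 1) (gammaD d a) (ketD d 0) := by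
  simp [stateOf]

lemma stateOf_8 (d a p : ℕ) : stateOf d ⟨8, by norm_num⟩ a p = tp5 (ketD d 0) (ketD d 1) (gammaD d a) (ketD d 0) (ketD d p) := by
  simp [stateOf]

lemma stateOf_9 (d a p : ℕ) : stateOf d ⟨9, by norm_num⟩ a p = tp5 (ketD d 1) (gammaD d a) (ketD d 0) (ketD d p) (ketD d 0) := by
  simp [stateOf]



lemma stateOf_0' (d a p : ℕ) : stateOf d 0 a p = tp5 (alphaD d a) (alphaD d a) (ketD d p) (ketD d 0) (ketD d 0) := stateOf_0 d a p
lemma stateOf_1' (d a p : ℕ) : stateOf d 1 a p = tp5 (alphaD d a) (ketD d p) (ketD d 0) (ketD d 0) (alphaD d a) := stateOf_1 d a p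
lemma stateOf_2' (d a p : ℕ) : stateOf d 2 a p = tp5 (ketD d p) (ketD d 0) (ketD d 0) (alphaD d a) (alphaD d a) := stateOf_2 d a p
lemma stateOf_3' (d a p : ℕ) : stateOf d 3 a p = tp5 (ketD d 0) (ketD d 0) (alphaD d a) (alphaD d a) (ketD d p) := stateOf_3 d a p
lemma stateOf_4' (d a p : ℕ) : stateOf d 4 a p = tp5 (ketD d 0) (alphaD d a) (alphaD d a) (ketD d p) (ketD d 0) := stateOf_4 d a p
lemma stateOf_5' (d a p : ℕ) : stateOf d 5 a p = tp5 (gammaD d a) (ketD d 0) (ketD d p) (ketD d 0) (ketD d 1) := stateOf_5 d a p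
lemma stateOf_6' (d a p : ℕ) : stateOf d 6 a p = tp5 (ketD d 0) (ketD d p) (ketD d 0) (ketD d 1) (gammaD d a) := stateOf_6 d a p
lemma stateOf_7' (d a p : ℕ) : stateOf d 7 a p = tp5 (ketD d p) (ketD d 0) (ketD d 1) (gammaD d a) (ketD d 0) := stateOf_7 d a p
lemma stateOf_8' (d a p : ℕ) : stateOf d 8 a p = tp5 (ketD d 0) (ketD d 1) (gammaD d a) (ketD d 0) (ketD d p) := stateOf_8 d a p
lemma stateOf_9' (d a p : ℕ) : stateOf d 9 a p = tp5 (ketD d 1) (gammaD d a) (ketD d 0) (ketD d p) (ketD d 0) := stateOf_9 d a p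


lemma stateOf_ne_zero {d : ℕ} (hd : 3 ≤ d) {k : Fin 10} {a p : ℕ}
    (hv : validIdx d k a p) : stateOf d k a p ≠ 0 := by
  obtain ⟨ha, hp1, hp2⟩ := hv
  have h0 : 0 < d := by omega
  have h1 : 1 < d := by omega
  intro hzero
  fin_cases k <;>
    first
    | (refine absurd (congrFun (congrArg WithLp.ofLp hzero) ![⟨0,h0⟩,⟨0,h0⟩,⟨p,hp2⟩,⟨0,h0⟩,⟨0,h0⟩]) ?_;
         simp [stateOf_0', stateOf_1', stateOf_2', stateOf_3', stateOf_4', stateOf_5',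
          stateOf_6', stateOf_7', stateOf_8', stateOf_9', tp5, ofFun, alphaD, ketD, gammaD];
          done)
    | (refine absurd (congrFun (congrArg WithLp.ofLp hzero) ![⟨0,h0⟩,⟨p,hp2⟩,⟨0,h0⟩,⟨0,h0⟩,⟨0,h0⟩]) ?_;
         simp [stateOf_0', stateOf_1', stateOf_2', stateOf_3', stateOf_4', stateOf_5',
          stateOf_6', stateOf_7', stateOf_8', stateOf_9', tp5, ofFun, alphaD, ketD, gammaD];
          done)
    | (refine absurd (congrFun (congrArg WithLp.ofLp hzero) ![⟨p,hp2⟩,⟨0,h0⟩,⟨0,h0⟩,⟨0,h0⟩,⟨0,h0⟩]) ?_;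
         simp [stateOf_0', stateOf_1', stateOf_2', stateOf_3', stateOf_4', stateOf_5',
          stateOf_6', stateOf_7', stateOf_8', stateOf_9', tp5, ofFun, alphaD, ketD, gammaD];
          done)
    | (refine absurd (congrFun (congrArg WithLp.ofLp hzero) ![⟨0,h0⟩,⟨0,h0⟩,⟨0,h0⟩,⟨0,h0⟩,⟨p,hp2⟩]) ?_;
         simp [stateOf_0', stateOf_1', stateOf_2', stateOf_3', stateOf_4', stateOf_5',
          stateOf_6', stateOf_7', stateOf_8', stateOf_9', tp5, ofFun, alphaD, ketD, gammaD];
          done)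
    | (refine absurd (congrFun (congrArg WithLp.ofLp hzero) ![⟨0,h0⟩,⟨0,h0⟩,⟨0,h0⟩,⟨p,hp2⟩,⟨0,h0⟩]) ?_;
         simp [stateOf_0', stateOf_1', stateOf_2', stateOf_3', stateOf_4', stateOf_5',
          stateOf_6', stateOf_7', stateOf_8', stateOf_9', tp5, ofFun, alphaD, ketD, gammaD];
          done)
    | (refine absurd (congrFun (congrArg WithLp.ofLp hzero) ![⟨1,h1⟩,⟨0,h0⟩,⟨p,hp2⟩,⟨0,h0⟩,⟨1,h1⟩]) ?_;
         simp [stateOf_0', stateOf_1', stateOf_2', stateOf_3', stateOf_4', stateOf_5',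
          stateOf_6', stateOf_7', stateOf_8', stateOf_9', tp5, ofFun, alphaD, ketD, gammaD];
          done)
    | (refine absurd (congrFun (congrArg WithLp.ofLp hzero) ![⟨0,h0⟩,⟨p,hp2⟩,⟨0,h0⟩,⟨1,h1⟩,⟨1,h1⟩]) ?_;
         simp [stateOf_0', stateOf_1', stateOf_2', stateOf_3', stateOf_4', stateOf_5',
          stateOf_6', stateOf_7', stateOf_8', stateOf_9', tp5, ofFun, alphaD, ketD, gammaD];
          done)
    | (refine absurd (congrFun (congrArg WithLp.ofLp hzero) ![⟨p,hp2⟩,⟨0,h0⟩,⟨1,h1⟩,⟨1,h1⟩,⟨0,h0⟩]) ?_;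
         simp [stateOf_0', stateOf_1', stateOf_2', stateOf_3', stateOf_4', stateOf_5',
          stateOf_6', stateOf_7', stateOf_8', stateOf_9', tp5, ofFun, alphaD, ketD, gammaD];
          done)
    | (refine absurd (congrFun (congrArg WithLp.ofLp hzero) ![⟨0,h0⟩,⟨1,h1⟩,⟨1,h1⟩,⟨0,h0⟩,⟨p,hp2⟩]) ?_;
         simp [stateOf_0', stateOf_1', stateOf_2', stateOf_3', stateOf_4', stateOf_5',
          stateOf_6', stateOf_7', stateOf_8', stateOf_9', tp5, ofFun, alphaD, ketD, gammaD];
          done)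
    | (refine absurd (congrFun (congrArg WithLp.ofLp hzero) ![⟨1,h1⟩,⟨1,h1⟩,⟨0,h0⟩,⟨p,hp2⟩,⟨0,h0⟩]) ?_;
         simp [stateOf_0', stateOf_1', stateOf_2', stateOf_3', stateOf_4', stateOf_5',
          stateOf_6', stateOf_7', stateOf_8', stateOf_9', tp5, ofFun, alphaD, ketD, gammaD];
          done)

lemma states_orth {d : ℕ} (hd : 3 ≤ d) {k k' : Fin 10} {a p a' p' : ℕ}
    (h1 : validIdx d k a p) (h2 : validIdx d k' a' p')
    (hne : (k, a, p) ≠ (k', a', p')) :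
    (inner ℂ (stateOf d k a p) (stateOf d k' a' p') : ℂ) = 0 := by
  obtain ⟨ha, hp1, hp2⟩ := h1
  obtain ⟨ha', hp1', hp2'⟩ := h2
  have hp0 : ¬(p = 0) := by omega
  have hp0' : ¬(p' = 0) := by omega
  have zp0 : (inner ℂ (ketD d p) (ketD d 0) : ℂ) = 0 := by
    rw [inner_ketD_ketD, if_neg (fun hc => hp0 hc.1)]
  have z0p : (inner ℂ (ketD d 0) (ketD d p') : ℂ) = 0 := by
    rw [inner_ketD_ketD, if_neg (by omega)]
  have z01 : (inner ℂ (ketD d 0) (ketD d 1) : ℂ) = 0 := by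
    rw [inner_ketD_ketD, if_neg (by omega)]
  have z10 : (inner ℂ (ketD d 1) (ketD d 0) : ℂ) = 0 := by
    rw [inner_ketD_ketD, if_neg (by omega)]
  by_cases hk : k = k'
  · subst hk
    have hap : a ≠ a' ∨ p ≠ p' := by
      by_contra hc
      push_neg at hc
      exact hne (by rw [hc.1, hc.2])
    rcases hap with haa | hpp
    · fin_cases k <;>
        first
        | (have hA := inner_alphaD_ne (d := d) (i := a) (j := a')
              (by simpa using ha) (by simpa using ha') haa;
           simp only [stateOf_0, stateOf_1, stateOf_2, stateOf_3, stateOf_4, stateOf_5,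
              stateOf_6, stateOf_7, stateOf_8, stateOf_9];
           rw [inner_tp5, hA];
           ring)
        | (have hG := inner_gammaD_ne (d := d) (m := a) (m' := a')
              (by simpa using ha) (by simpa using ha') haa hd;
           simp only [stateOf_0, stateOf_1, stateOf_2, stateOf_3, stateOf_4, stateOf_5,
              stateOf_6, stateOf_7, stateOf_8, stateOf_9];
           rw [inner_tp5, hG];
           ring)
    · have hpe : (inner ℂ (ketD d p) (ketD d p') : ℂ) = 0 := by
        rw [inner_ketD_ketD, if_neg (fun hc => hpp hc.1)]
      fin_cases k <;>
        (simp only [stateOf_0, stateOf_1, stateOf_2, stateOf_3, stateOf_4, stateOf_5,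
            stateOf_6, stateOf_7, stateOf_8, stateOf_9];
         rw [inner_tp5, hpe];
         ring)
  · fin_cases k <;> fin_cases k' <;>
      first
      | exact absurd rfl hk
      | (simp only [stateOf_0, stateOf_1, stateOf_2, stateOf_3, stateOf_4, stateOf_5,
            stateOf_6, stateOf_7, stateOf_8, stateOf_9];
         rw [inner_tp5];
         simp only [zp0, z0p, z01, z10, inner_gammaD_ket0, inner_ket0_gammaD,
           mul_zero, zero_mul])

/-- Step 1 of Theorem 10: the post-measurement states of set (5),
with two four-partite `|F⟩` ancilla states, are nonzero and pairwise orthogonal. -/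
theorem thm10_step1_orthogonality_preserving (d : ℕ) (hd : 3 ≤ d) :
    (∀ (k : Fin 10) (a p : ℕ), validIdx d k a p → postF d (stateOf d k a p) ≠ 0) ∧
    (∀ (k k' : Fin 10) (a p a' p' : ℕ), validIdx d k a p → validIdx d k' a' p' →
      (k, a, p) ≠ (k', a', p') →
      (inner ℂ (postF d (stateOf d k a p)) (postF d (stateOf d k' a' p')) : ℂ) = 0) := by
  constructor
  · intro k a p hv hzero
    have h2 := inner_postF d (stateOf d k a p) (stateOf d k a p)
    rw [hzero, inner_zero_left] at h2
    have h3 : (inner ℂ (stateOf d k a p) (stateOf d k a p) : ℂ) = 0 := by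
      rcases mul_eq_zero.mp h2.symm with h | h
      · norm_num at h
      · exact h
    exact stateOf_ne_zero hd hv (inner_self_eq_zero.mp h3)
  · intro k k' a p a' p' hv hv' hne
    rw [inner_postF, states_orth hd hv hv' hne, mul_zero]
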